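/- Let a ≥ b ≥ 1 be integers and let u be a universal p-ary design for (a,b) with coefficient sequence (μ_0,…,μ_{b−1}). If μ_j ≠ 0 for some 0 ≤ j < b, then (b − j)_m + a_m < p for every 0 ≤ m < l_p(b), where n_m denotes the m-th digit of n in base p and l_p(b) = ⌊log_p b⌋. -/

import Mathlib

open Finset


lemma modPowSucc (x p m : ℕ) :
    x % p ^ (m + 1) = (x / p ^ m % p) * p ^ m + x % p ^ m := by
  have h2 : x % (p ^ m * p) / p ^ m = x / p ^ m % p := Nat.mod_mul_right_div_self x (p^m) p
  have h3 : x % (p ^ m * p) % p ^ m = x % p ^ m := Nat.mod_mod_of_dvd x ⟨p, rfl⟩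
  have h4 := Nat.div_add_mod (x % (p ^ m * p)) (p ^ m)
  rw [pow_succ, ← h4, h2, h3, mul_comm]

lemma carryIff {p : ℕ} (hp : p.Prime) {s x : ℕ} (hsx : s ≤ x) (i : ℕ) :
    (p ^ i ≤ s % p ^ i + (x - s) % p ^ i ↔ x % p ^ i < s % p ^ i) := by
  have hpos : 0 < p ^ i := pow_pos hp.pos i
  revert hpos
  generalize p ^ i = P
  intro hpos
  have h1 : (x - s) + s = x := Nat.sub_add_cancel hsx
  have h3 : x % P < P := Nat.mod_lt _ hpos
  have h4 : s % P < P := Nat.mod_lt _ hpos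
  have h5 : (x - s) % P < P := Nat.mod_lt _ hpos
  rcases Nat.lt_or_ge ((x - s) % P + s % P) P with h | h
  · have h2' : x % P = (x - s) % P + s % P := by
      conv_lhs => rw [← h1]
      rw [Nat.add_mod, Nat.mod_eq_of_lt h]
    omega
  · have h2' : x % P = (x - s) % P + s % P - P := by
      conv_lhs => rw [← h1]
      rw [Nat.add_mod, Nat.mod_eq_sub_mod h, Nat.mod_eq_of_lt (by omega)]
    omega

lemma dvdChooseIff {p : ℕ} (hp : p.Prime) {s x : ℕ} (hsx : s ≤ x) :
    p ∣ x.choose s ↔ ∃ i, x % p ^ i < s % p ^ i := by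
  have hiff : p ∣ x.choose s ↔ emultiplicity p (x.choose s) ≠ 0 := by
    rw [Ne, emultiplicity_eq_zero, not_not]
  rw [hiff, hp.emultiplicity_choose hsx (Nat.lt_succ_self _)]
  rw [Ne, Nat.cast_eq_zero, Finset.card_eq_zero, ← Ne, ← Finset.nonempty_iff_ne_empty]
  constructor
  · rintro ⟨i, hi⟩
    rw [mem_filter] at hi
    exact ⟨i, (carryIff hp hsx i).mp hi.2⟩
  · rintro ⟨i, hi⟩
    have h1 : 1 ≤ i := by
      rcases Nat.eq_zero_or_pos i with h | h
      · subst h; rw [pow_zero] at hi; omega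
      · exact h
    have hs0 : 0 < s % p ^ i := Nat.lt_of_le_of_lt (Nat.zero_le _) hi
    have hx0 : x ≠ 0 := by
      intro h; subst h
      have : s = 0 := Nat.le_zero.mp hsx
      subst this; simp at hs0
    have hpix : p ^ i ≤ x := by
      by_contra hlt
      push_neg at hlt
      rw [Nat.mod_eq_of_lt hlt] at hi
      exact absurd hi (not_lt.mpr (le_trans (Nat.mod_le _ _) hsx))
    have hilog : i ≤ Nat.log p x := (Nat.le_log_iff_pow_le hp.one_lt hx0).mpr hpix
    exact ⟨i, mem_filter.mpr ⟨mem_Ico.mpr ⟨h1, by omega⟩, (carryIff hp hsx i).mpr hi⟩⟩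

lemma cardBetween {α : Type*} [DecidableEq α] [Fintype α] (Y' Z : Finset α) (hYZ : Y' ⊆ Z)
    (t : ℕ) (ht : Y'.card ≤ t) :
    (univ.filter (fun Y : Finset α => Y.card = t ∧ Y' ⊆ Y ∧ Y ⊆ Z)).card
      = (Z.card - Y'.card).choose (t - Y'.card) := by
  have hkey : ((Z \ Y').powersetCard (t - Y'.card)).card
      = (Z.card - Y'.card).choose (t - Y'.card) := by
    rw [card_powersetCard, card_sdiff_of_subset hYZ]
  rw [← hkey]
  apply card_bij' (fun Y _ => Y \ Y') (fun W _ => Y' ∪ W)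
  · intro Y hY
    rw [mem_filter] at hY
    obtain ⟨-, hYt, hY'Y, hYZ'⟩ := hY
    rw [mem_powersetCard]
    exact ⟨sdiff_subset_sdiff hYZ' (le_refl _), by rw [card_sdiff_of_subset hY'Y, hYt]⟩
  · intro W hW
    rw [mem_powersetCard] at hW
    obtain ⟨hWsub, hWcard⟩ := hW
    have hdisj : Disjoint Y' W := disjoint_sdiff.mono_right hWsub
    rw [mem_filter]
    refine ⟨mem_univ _, ?_, subset_union_left, union_subset hYZ (hWsub.trans sdiff_subset)⟩
    rw [card_union_of_disjoint hdisj, hWcard]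
    omega
  · intro Y hY
    rw [mem_filter] at hY
    exact union_sdiff_of_subset hY.2.2.1
  · intro W hW
    rw [mem_powersetCard] at hW
    exact union_sdiff_cancel_left (disjoint_sdiff.mono_right hW.1)

lemma designRel {v : ℕ} {k : Type*} [CommRing k]
    (u : Finset (Fin v) → k) (μ : ℕ → k) (b : ℕ) (hbv : b ≤ v)
    (hu : ∀ t < b, ∀ Y : Finset (Fin v), Y.card = t →
        ∑ X ∈ univ.filter (fun X : Finset (Fin v) => X.card = b ∧ Y ⊆ X), u X = μ t)
    (t' t : ℕ) (h1 : t' ≤ t) (h2 : t < b) :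
    ((v - t').choose (t - t') : k) * μ t = ((b - t').choose (t - t') : k) * μ t' := by
  classical
  obtain ⟨Y', hY'sub, hY'card⟩ :=
    Finset.exists_subset_card_eq (s := (univ : Finset (Fin v))) (n := t')
      (by rw [card_univ, Fintype.card_fin]; omega)
  have hcount1 : (univ.filter (fun Y : Finset (Fin v) => Y.card = t ∧ Y' ⊆ Y)).card
      = (v - t').choose (t - t') := by
    have he : (univ.filter (fun Y : Finset (Fin v) => Y.card = t ∧ Y' ⊆ Y))
        = (univ.filter (fun Y : Finset (Fin v) => Y.card = t ∧ Y' ⊆ Y ∧ Y ⊆ univ)) := by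
      apply filter_congr
      intro Y _
      simp [subset_univ]
    rw [he, cardBetween Y' univ (subset_univ _) t (by omega), card_univ, Fintype.card_fin,
      hY'card]
  have step1 : ∑ Y ∈ univ.filter (fun Y : Finset (Fin v) => Y.card = t ∧ Y' ⊆ Y),
      ∑ X ∈ univ.filter (fun X : Finset (Fin v) => X.card = b ∧ Y ⊆ X), u X
      = ((v - t').choose (t - t') : k) * μ t := by
    rw [Finset.sum_congr rfl (fun Y hY => hu t h2 Y (mem_filter.mp hY).2.1)]
    rw [sum_const, nsmul_eq_mul, hcount1]
  have step2 : ∑ Y ∈ univ.filter (fun Y : Finset (Fin v) => Y.card = t ∧ Y' ⊆ Y),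
      ∑ X ∈ univ.filter (fun X : Finset (Fin v) => X.card = b ∧ Y ⊆ X), u X
      = ∑ X ∈ univ.filter (fun X : Finset (Fin v) => X.card = b ∧ Y' ⊆ X),
        ∑ Y ∈ univ.filter (fun Y : Finset (Fin v) => Y.card = t ∧ Y' ⊆ Y ∧ Y ⊆ X), u X := by
    apply Finset.sum_comm'
    intro Y X
    simp only [mem_filter, mem_univ, true_and]
    constructor
    · rintro ⟨⟨hYt, hY'Y⟩, hXb, hYX⟩
      exact ⟨⟨hYt, hY'Y, hYX⟩, hXb, hY'Y.trans hYX⟩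
    · rintro ⟨⟨hYt, hY'Y, hYX⟩, hXb, -⟩
      exact ⟨⟨hYt, hY'Y⟩, hXb, hYX⟩
  have step3 : ∑ X ∈ univ.filter (fun X : Finset (Fin v) => X.card = b ∧ Y' ⊆ X),
      ∑ Y ∈ univ.filter (fun Y : Finset (Fin v) => Y.card = t ∧ Y' ⊆ Y ∧ Y ⊆ X), u X
      = ((b - t').choose (t - t') : k) * μ t' := by
    have he : ∀ X ∈ univ.filter (fun X : Finset (Fin v) => X.card = b ∧ Y' ⊆ X),
        ∑ Y ∈ univ.filter (fun Y : Finset (Fin v) => Y.card = t ∧ Y' ⊆ Y ∧ Y ⊆ X), u X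
        = ((b - t').choose (t - t') : k) * u X := by
      intro X hX
      rw [mem_filter] at hX
      obtain ⟨-, hXb, hY'X⟩ := hX
      rw [sum_const, nsmul_eq_mul]
      congr 1
      have := cardBetween Y' X hY'X t (by omega)
      rw [this, hXb, hY'card]
    rw [Finset.sum_congr rfl he, ← mul_sum]
    congr 1
    exact hu t' (by omega) Y' hY'card
  rw [← step1, step2, step3]

lemma weaponE1 (p : ℕ) (hp : p.Prime) (k : Type*) [Field k] [CharP k p]
    (a b : ℕ) (u : Finset (Fin (a + b)) → k) (μ : ℕ → k)
    (hu : ∀ t < b, ∀ Y : Finset (Fin (a + b)), Y.card = t →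
        ∑ X ∈ univ.filter (fun X : Finset (Fin (a + b)) => X.card = b ∧ Y ⊆ X), u X = μ t)
    (j : ℕ) (hj : j < b) (hμ : μ j ≠ 0)
    (s : ℕ) (hs : s < b - j)
    (hd : p ∣ (a + (b - j)).choose s) (hnd : ¬ p ∣ (b - j).choose s) : False := by
  have hrel := designRel u μ b (Nat.le_add_left b a) hu j (j + s)
    (Nat.le_add_right _ _) (by omega)
  rw [show a + b - j = a + (b - j) by omega, show j + s - j = s by omega] at hrel
  have hz : (((a + (b - j)).choose s : ℕ) : k) = 0 := (CharP.cast_eq_zero_iff k p _).mpr hd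
  have hnz : (((b - j).choose s : ℕ) : k) ≠ 0 := fun h =>
    hnd ((CharP.cast_eq_zero_iff k p _).mp h)
  rw [hz, zero_mul] at hrel
  exact hμ ((mul_eq_zero.mp hrel.symm).resolve_left hnz)

lemma weaponE2 (p : ℕ) (hp : p.Prime) (k : Type*) [Field k] [CharP k p]
    (a b : ℕ) (u : Finset (Fin (a + b)) → k) (μ : ℕ → k)
    (hu : ∀ t < b, ∀ Y : Finset (Fin (a + b)), Y.card = t →
        ∑ X ∈ univ.filter (fun X : Finset (Fin (a + b)) => X.card = b ∧ Y ⊆ X), u X = μ t)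
    (j : ℕ) (hj : j < b) (hμ : μ j ≠ 0)
    (s : ℕ) (hs : s ≤ j)
    (hd : p ∣ ((b - j) + s).choose s) (hnd : ¬ p ∣ (a + (b - j) + s).choose s) : False := by
  have hrel := designRel u μ b (Nat.le_add_left b a) hu (j - s) j (by omega) hj
  rw [show a + b - (j - s) = a + (b - j) + s by omega,
      show b - (j - s) = (b - j) + s by omega,
      show j - (j - s) = s by omega] at hrel
  have hz : ((((b - j) + s).choose s : ℕ) : k) = 0 := (CharP.cast_eq_zero_iff k p _).mpr hd
  have hnz : (((a + (b - j) + s).choose s : ℕ) : k) ≠ 0 := fun h =>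
    hnd ((CharP.cast_eq_zero_iff k p _).mp h)
  rw [hz, zero_mul] at hrel
  exact hμ ((mul_eq_zero.mp hrel).resolve_left hnz)

/-- Let `k` be a field of characteristic `p`, `a ≥ b ≥ 1`, and let `u`
be a universal `p`-ary design for `(a,b)` with coefficient sequence `μ_0, …, μ_{b−1}`.
If `μ_j ≠ 0` for some `j < b`, then `(b − j)_m + a_m < p` for every `m < l_p(b)`,
where `n_m` denotes the `m`-th base-`p` digit of `n`. -/
theorem nonnull_coeff_digit_condition (p : ℕ) (hp : p.Prime)
    (k : Type*) [Field k] [CharP k p]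
    (a b : ℕ) (hb : 1 ≤ b) (hab : b ≤ a)
    (u : Finset (Fin (a + b)) → k) (μ : ℕ → k)
    (hu : ∀ t < b, ∀ Y : Finset (Fin (a + b)), Y.card = t →
        ∑ X ∈ univ.filter (fun X : Finset (Fin (a + b)) => X.card = b ∧ Y ⊆ X), u X = μ t)
    (j : ℕ) (hj : j < b) (hμ : μ j ≠ 0) :
    ∀ m < Nat.log p b, (b - j) / p ^ m % p + a / p ^ m % p < p := by
  intro m
  induction m using Nat.strong_induction_on with
  | _ m IH =>
    intro hm
    by_contra hcon
    push_neg at hcon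
    have hppos : 0 < p := hp.pos
    have hqb : p ^ (m + 1) ≤ b := by
      have h1 : p ^ (m + 1) ≤ p ^ Nat.log p b := Nat.pow_le_pow_right hppos hm
      exact h1.trans (Nat.pow_log_le_self p (by omega))
    have hn1 : 1 ≤ b - j := by omega
    have hlow : ∀ i ≤ m, a % p ^ i + (b - j) % p ^ i < p ^ i := by
      intro i hi
      induction i with
      | zero => simp [Nat.mod_one]
      | succ i ih =>
        have hih := ih (by omega)
        have hdig : (b - j) / p ^ i % p + a / p ^ i % p < p := IH i (by omega) (by omega)
        have e1 := modPowSucc a p i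
        have e2 := modPowSucc (b - j) p i
        have h5 : (a / p ^ i % p) * p ^ i + ((b - j) / p ^ i % p) * p ^ i ≤ (p - 1) * p ^ i := by
          rw [← Nat.add_mul]
          exact Nat.mul_le_mul_right _ (by omega)
        have h6 : (p - 1) * p ^ i + p ^ i = p ^ (i + 1) := by
          have h7 : (p - 1) * p ^ i + p ^ i = ((p - 1) + 1) * p ^ i := by ring
          rw [h7, show (p - 1) + 1 = p by omega, ← pow_succ']
        have hpi0 : 0 < p ^ i := pow_pos hppos i
        have hpi1 : 0 < p ^ (i + 1) := pow_pos hppos _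
        omega
    have hpm : 0 < p ^ m := pow_pos hppos m
    have hpm1 : 0 < p ^ (m + 1) := pow_pos hppos _
    have hA : p ^ (m + 1) ≤ a % p ^ (m + 1) + (b - j) % p ^ (m + 1) := by
      have e1 := modPowSucc a p m
      have e2 := modPowSucc (b - j) p m
      have h5 : p * p ^ m ≤ (a / p ^ m % p) * p ^ m + ((b - j) / p ^ m % p) * p ^ m := by
        rw [← Nat.add_mul]
        exact Nat.mul_le_mul_right _ (by omega)
      calc p ^ (m + 1) = p * p ^ m := pow_succ' p m
        _ ≤ (a / p ^ m % p) * p ^ m + ((b - j) / p ^ m % p) * p ^ m := h5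
        _ ≤ ((a / p ^ m % p) * p ^ m + a % p ^ m)
            + (((b - j) / p ^ m % p) * p ^ m + (b - j) % p ^ m) :=
          Nat.add_le_add (Nat.le_add_right _ _) (Nat.le_add_right _ _)
        _ = a % p ^ (m + 1) + (b - j) % p ^ (m + 1) := by rw [← e1, ← e2]
    have haq : a % p ^ (m + 1) < p ^ (m + 1) := Nat.mod_lt _ (pow_pos hppos _)
    rcases le_or_gt (p ^ (m + 1)) (b - j) with hcase | hcase
    · -- Case 1: E1 with s = (b - j) % p ^ (m+1)
      have hnqlt : (b - j) % p ^ (m + 1) < p ^ (m + 1) := Nat.mod_lt _ (pow_pos hppos _)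
      have hs_lt : (b - j) % p ^ (m + 1) < b - j := lt_of_lt_of_le hnqlt hcase
      apply weaponE1 p hp k a b u μ hu j hj hμ ((b - j) % p ^ (m + 1)) hs_lt ?hd ?hnd
      case hd =>
        rw [dvdChooseIff hp (le_trans hs_lt.le (Nat.le_add_left _ _))]
        refine ⟨m + 1, ?_⟩
        have h1 : (a + (b - j)) % p ^ (m + 1)
            = a % p ^ (m + 1) + (b - j) % p ^ (m + 1) - p ^ (m + 1) := by
          rw [Nat.add_mod, Nat.mod_eq_sub_mod hA, Nat.mod_eq_of_lt (by omega)]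
        have h2 : (b - j) % p ^ (m + 1) % p ^ (m + 1) = (b - j) % p ^ (m + 1) :=
          Nat.mod_eq_of_lt hnqlt
        omega
      case hnd =>
        rw [dvdChooseIff hp hs_lt.le]
        rintro ⟨i, hi⟩
        have hpi : 0 < p ^ i := pow_pos hppos i
        rcases le_or_gt i (m + 1) with h | h
        · have h1 : (b - j) % p ^ (m + 1) % p ^ i = (b - j) % p ^ i :=
            Nat.mod_mod_of_dvd _ (pow_dvd_pow p h)
          omega
        · have h1 : (b - j) % p ^ (m + 1) % p ^ i = (b - j) % p ^ (m + 1) :=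
            Nat.mod_eq_of_lt (lt_of_lt_of_le hnqlt (Nat.pow_le_pow_right hppos (by omega)))
          have h2 : (b - j) % p ^ i % p ^ (m + 1) = (b - j) % p ^ (m + 1) :=
            Nat.mod_mod_of_dvd _ (pow_dvd_pow p (by omega))
          have h3 : (b - j) % p ^ (m + 1) ≤ (b - j) % p ^ i := by
            rw [← h2]; exact Nat.mod_le _ _
          omega
    · have hnq : (b - j) % p ^ (m + 1) = b - j := Nat.mod_eq_of_lt hcase
      rcases Nat.eq_zero_or_pos ((b - j) % p ^ m) with hnl | hnl
      · -- Case 3: E2 with s = p^(m+1) - (b - j)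
        have hsj : p ^ (m + 1) - (b - j) ≤ j := by omega
        apply weaponE2 p hp k a b u μ hu j hj hμ (p ^ (m + 1) - (b - j)) hsj ?hd ?hnd
        case hd =>
          rw [dvdChooseIff hp (Nat.le_add_left _ _)]
          refine ⟨m + 1, ?_⟩
          rw [show (b - j) + (p ^ (m + 1) - (b - j)) = p ^ (m + 1) by omega, Nat.mod_self]
          have h1 : (p ^ (m + 1) - (b - j)) % p ^ (m + 1) = p ^ (m + 1) - (b - j) :=
            Nat.mod_eq_of_lt (by omega)
          omega
        case hnd =>
          rw [dvdChooseIff hp (Nat.le_add_left _ _)]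
          rintro ⟨i, hi⟩
          have hpi : 0 < p ^ i := pow_pos hppos i
          rw [show a + (b - j) + (p ^ (m + 1) - (b - j)) = a + p ^ (m + 1) by omega] at hi
          rcases le_or_gt i m with h | h
          · have hdvd : p ^ i ∣ p ^ (m + 1) - (b - j) :=
              Nat.dvd_sub (pow_dvd_pow p (by omega))
                ((pow_dvd_pow p h).trans (Nat.dvd_of_mod_eq_zero hnl))
            have h1 : (p ^ (m + 1) - (b - j)) % p ^ i = 0 :=
              Nat.mod_eq_zero_of_dvd hdvd
            rw [h1] at hi
            exact Nat.not_lt_zero _ hi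
          · have h1 : (p ^ (m + 1) - (b - j)) % p ^ i = p ^ (m + 1) - (b - j) :=
              Nat.mod_eq_of_lt
                (lt_of_lt_of_le (show p ^ (m + 1) - (b - j) < p ^ (m + 1) by omega)
                  (Nat.pow_le_pow_right hppos (by omega)))
            rw [h1] at hi
            obtain ⟨T, hT⟩ : ∃ T, (a + p ^ (m + 1)) % p ^ i = T := ⟨_, rfl⟩
            rw [hT] at hi
            have h2 : T % p ^ (m + 1) = a % p ^ (m + 1) := by
              rw [← hT, Nat.mod_mod_of_dvd _ (pow_dvd_pow p (show m + 1 ≤ i by omega)),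
                Nat.add_mod_right]
            have h6 : a % p ^ (m + 1) ≤ T := by
              have h7 := Nat.mod_le T (p ^ (m + 1))
              rw [h2] at h7
              exact h7
            have h5 : p ^ (m + 1) - (b - j) ≤ a % p ^ (m + 1) := by omega
            omega
      · -- Case 2: E1 with s = ((b - j) / p ^ m) * p ^ m
        have hsplit : ((b - j) / p ^ m) * p ^ m + (b - j) % p ^ m = b - j := by
          rw [mul_comm]; exact Nat.div_add_mod _ _
        have hs_lt : ((b - j) / p ^ m) * p ^ m < b - j := by omega
        have ha_m : a / p ^ m % p < p := Nat.mod_lt _ hppos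
        have hcp : (b - j) / p ^ m < p := by
          rw [Nat.div_lt_iff_lt_mul (pow_pos hppos m)]
          calc b - j < p ^ (m + 1) := hcase
          _ = p * p ^ m := by rw [← pow_succ']
        have hceq : (b - j) / p ^ m % p = (b - j) / p ^ m := Nat.mod_eq_of_lt hcp
        apply weaponE1 p hp k a b u μ hu j hj hμ (((b - j) / p ^ m) * p ^ m) hs_lt ?hd2 ?hnd2
        case hnd2 =>
          rw [dvdChooseIff hp hs_lt.le]
          rintro ⟨i, hi⟩
          have hpi : 0 < p ^ i := pow_pos hppos i
          rcases le_or_gt i m with h | h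
          · have h1 : (((b - j) / p ^ m) * p ^ m) % p ^ i = 0 :=
              Nat.mod_eq_zero_of_dvd (Dvd.dvd.mul_left (pow_dvd_pow p h) _)
            rw [h1] at hi
            exact Nat.not_lt_zero _ hi
          · have h1 : (b - j) % p ^ i = b - j :=
              Nat.mod_eq_of_lt (lt_of_lt_of_le hcase (Nat.pow_le_pow_right hppos h))
            have h2 : (((b - j) / p ^ m) * p ^ m) % p ^ i = ((b - j) / p ^ m) * p ^ m :=
              Nat.mod_eq_of_lt
                (lt_of_lt_of_le (lt_trans hs_lt hcase) (Nat.pow_le_pow_right hppos h))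
            rw [h1, h2] at hi
            omega
        case hd2 =>
          rw [dvdChooseIff hp (le_trans hs_lt.le (Nat.le_add_left _ _))]
          refine ⟨m + 1, ?_⟩
          have e1 := modPowSucc a p m
          have hlowm := hlow m le_rfl
          have h1 : (a + (b - j)) % p ^ (m + 1)
              = a % p ^ (m + 1) + (b - j) - p ^ (m + 1) := by
            rw [Nat.add_mod, hnq, Nat.mod_eq_sub_mod (by omega), Nat.mod_eq_of_lt (by omega)]
          have h2 : (((b - j) / p ^ m) * p ^ m) % p ^ (m + 1) = ((b - j) / p ^ m) * p ^ m :=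
            Nat.mod_eq_of_lt (by omega)
          have h5 : (a / p ^ m % p) * p ^ m ≤ (p - 1) * p ^ m :=
            Nat.mul_le_mul_right _ (by omega)
          have h6 : (p - 1) * p ^ m + p ^ m = p ^ (m + 1) := by
            have h7 : (p - 1) * p ^ m + p ^ m = ((p - 1) + 1) * p ^ m := by ring
            rw [h7, show (p - 1) + 1 = p by omega, ← pow_succ']
          omega
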